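/- With notation as above, setting v = Σ_{j=1}^6 e_j × (∇_{e_j}ξ), the invariant i₁₅(∇Φ) = Σ_{i,j}(∇_{e_i}Φ)(φe_i,ξ)·(∇_{e_j}Φ)(e_j,ξ) equals -div(ξ)·g(ξ, v). -/

import Mathlib

open scoped RealInnerProductSpace

/-- With notation as in Statement 7 and `v = Σ_j e_j × (∇_{e_j}ξ)`,
the invariant `i₁₅(∇Φ) = Σ_{i,j}(∇_{e_i}Φ)(φe_i,ξ)·(∇_{e_j}Φ)(e_j,ξ)` equals
`-div(ξ)·g(ξ, v)`. -/
theorem i15_eq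
    {V : Type*} [NormedAddCommGroup V] [InnerProductSpace ℝ V]
    (cross : V → V → V)
    (hanti : ∀ x y : V, cross x y = - cross y x)
    (hskew : ∀ x y z : V, ⟪cross x y, z⟫ = - ⟪cross x z, y⟫)
    (nabla : V → V → V) (D : V → ℝ → ℝ)
    (hD0 : ∀ x, D x 0 = 0) (hD1 : ∀ x, D x 1 = 0)
    (hDg : ∀ x y z : V, D x ⟪y, z⟫ = ⟪nabla x y, z⟫ + ⟪y, nabla x z⟫)
    (ξ : V) (e : Fin 6 → V)
    (hON : Orthonormal ℝ (Fin.snoc e ξ : Fin 7 → V))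
    (hdouble : ∀ x : V, cross ξ (cross ξ x) = -x + ⟪ξ, x⟫ • ξ)
    (Φ : V → V → ℝ) (hΦ : ∀ x y, Φ x y = ⟪x, cross ξ y⟫)
    (nablaPhi : V → V → V → ℝ)
    (hnablaPhi : ∀ x y z, nablaPhi x y z
      = D x (Φ y z) - Φ (nabla x y) z - Φ y (nabla x z))
    (divξ : ℝ)
    (hdiv : divξ = (∑ i : Fin 6, ⟪nabla (e i) ξ, e i⟫) + ⟪nabla ξ ξ, ξ⟫)
    (v : V) (hv : v = ∑ j : Fin 6, cross (e j) (nabla (e j) ξ)) :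
    ∑ i : Fin 6, ∑ j : Fin 6,
        nablaPhi (e i) (cross ξ (e i)) ξ * nablaPhi (e j) (e j) ξ
      = - divξ * ⟪ξ, v⟫ := by
  have horth := orthonormal_iff_ite.mp hON
  have hξξ : (⟪ξ, ξ⟫ : ℝ) = 1 := by
    have := horth (Fin.last 6) (Fin.last 6); rw [Fin.snoc_last, if_pos rfl] at this; exact this
  have hξe : ∀ i : Fin 6, (⟪ξ, e i⟫ : ℝ) = 0 := by
    intro i
    have := horth (Fin.last 6) (Fin.castSucc i)
    rw [Fin.snoc_last, Fin.snoc_castSucc, if_neg (Fin.castSucc_lt_last i).ne'] at this; exact this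
  have hcross0 : cross ξ ξ = 0 := by
    have h := hanti ξ ξ
    have h2 : (2 : ℝ) • cross ξ ξ = 0 := by
      rw [two_smul]; nth_rewrite 2 [h]; simp
    exact (smul_eq_zero.mp h2).resolve_left (by norm_num)
  have hΦξ : ∀ y, Φ y ξ = 0 := fun y => by
    rw [hΦ, hcross0, inner_zero_right]
  have hNP : ∀ x y, nablaPhi x y ξ = -⟪y, cross ξ (nabla x ξ)⟫ := fun x y => by
    rw [hnablaPhi, hΦξ, hΦξ, hD0, hΦ]; ring
  have key1 : ∀ i : Fin 6, nablaPhi (e i) (cross ξ (e i)) ξ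
      = -⟪nabla (e i) ξ, e i⟫ := by
    intro i
    rw [hNP, hskew ξ (e i) (cross ξ (nabla (e i) ξ)), hdouble]
    rw [inner_add_left, inner_neg_left, real_inner_smul_left, hξe i]
    ring
  have key2 : ∀ j : Fin 6, nablaPhi (e j) (e j) ξ
      = ⟪ξ, cross (e j) (nabla (e j) ξ)⟫ := by
    intro j
    rw [hNP]
    have a := hskew (e j) (nabla (e j) ξ) ξ
    have b := hskew ξ (nabla (e j) ξ) (e j)
    rw [hanti (e j) ξ, inner_neg_left] at a
    have d1 : (⟪ξ, cross (e j) (nabla (e j) ξ)⟫ : ℝ)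
        = ⟪cross (e j) (nabla (e j) ξ), ξ⟫ := real_inner_comm _ _
    have d2 : (⟪e j, cross ξ (nabla (e j) ξ)⟫ : ℝ)
        = ⟪cross ξ (nabla (e j) ξ), e j⟫ := real_inner_comm _ _
    linarith
  have hnξξ : (⟪nabla ξ ξ, ξ⟫ : ℝ) = 0 := by
    have h := hDg ξ ξ ξ
    rw [hξξ, hD1] at h
    have h2 : (⟪ξ, nabla ξ ξ⟫ : ℝ) = ⟪nabla ξ ξ, ξ⟫ := real_inner_comm _ _
    linarith
  have hsum1 : ∑ i : Fin 6, nablaPhi (e i) (cross ξ (e i)) ξ = -divξ := by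
    rw [hdiv, hnξξ]
    simp [key1]
  have hsum2 : ∑ j : Fin 6, nablaPhi (e j) (e j) ξ = ⟪ξ, v⟫ := by
    rw [hv, inner_sum]
    exact Finset.sum_congr rfl fun j _ => key2 j
  calc ∑ i : Fin 6, ∑ j : Fin 6,
        nablaPhi (e i) (cross ξ (e i)) ξ * nablaPhi (e j) (e j) ξ
      = (∑ i : Fin 6, nablaPhi (e i) (cross ξ (e i)) ξ)
        * (∑ j : Fin 6, nablaPhi (e j) (e j) ξ) := by
        rw [Finset.sum_mul_sum]
    _ = - divξ * ⟪ξ, v⟫ := by rw [hsum1, hsum2]
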